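/- For square matrices A, B, Q_c of size n, the iterated integral ∫₀ᵗ exp(Bτ) Q_c (∫₀^τ exp(Ar) dr) dτ equals exp(Bt) · H₃(t), where H₃(t) is the top-right n×n block of exp(H_c t) with H_c the 3n×3n block matrix [[-B, Q_c, 0],[0, 0, I],[0, 0, A]]. -/

import Mathlib

open Matrix MeasureTheory intervalIntegral

attribute [local instance] Matrix.frobeniusNormedAddCommGroup Matrix.frobeniusNormedSpace
attribute [local instance] Matrix.frobeniusNormedRing Matrix.frobeniusNormedAlgebra

noncomputable def matENormed {p q : Type*} [Fintype p] [Fintype q] :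
    ENormedAddCommMonoid (Matrix p q ℝ) :=
  NormedAddCommGroup.toENormedAddCommMonoid

attribute [local instance] matENormed

section Aux

variable {l m : Type*} [Fintype l] [Fintype m] [DecidableEq l] [DecidableEq m]

/-- `toBlocks₁₂` as a continuous linear map. -/
noncomputable def blocksCLM₁₂ :
    Matrix (l ⊕ m) (l ⊕ m) ℝ →L[ℝ] Matrix l m ℝ :=
  LinearMap.toContinuousLinearMap
    { toFun := Matrix.toBlocks₁₂
      map_add' := fun _ _ => rfl
      map_smul' := fun _ _ => rfl }

/-- `toBlocks₂₂` as a continuous linear map. -/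
noncomputable def blocksCLM₂₂ :
    Matrix (l ⊕ m) (l ⊕ m) ℝ →L[ℝ] Matrix m m ℝ :=
  LinearMap.toContinuousLinearMap
    { toFun := Matrix.toBlocks₂₂
      map_add' := fun _ _ => rfl
      map_smul' := fun _ _ => rfl }

/-- `toCols₂` as a continuous linear map. -/
noncomputable def columnsCLM₂ :
    Matrix l (l ⊕ m) ℝ →L[ℝ] Matrix l m ℝ :=
  LinearMap.toContinuousLinearMap
    { toFun := Matrix.toCols₂
      map_add' := fun _ _ => rfl
      map_smul' := fun _ _ => rfl }

lemma toCols₂_intervalIntegral {f : ℝ → Matrix l (l ⊕ m) ℝ} {a b : ℝ}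
    (hf : IntervalIntegrable f MeasureTheory.volume a b) :
    (∫ s in a..b, f s).toCols₂ = ∫ s in a..b, (f s).toCols₂ :=
  (ContinuousLinearMap.intervalIntegral_comp_comm (columnsCLM₂ (l := l) (m := m)) hf).symm

lemma hasDerivAt_toBlocks₁₂ {f : ℝ → Matrix (l ⊕ m) (l ⊕ m) ℝ}
    {f' : Matrix (l ⊕ m) (l ⊕ m) ℝ} {u : ℝ} (hf : HasDerivAt f f' u) :
    HasDerivAt (fun t => (f t).toBlocks₁₂) f'.toBlocks₁₂ u := by
  exact (blocksCLM₁₂ (l := l) (m := m)).hasFDerivAt.comp_hasDerivAt u hf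

lemma hasDerivAt_toBlocks₂₂ {f : ℝ → Matrix (l ⊕ m) (l ⊕ m) ℝ}
    {f' : Matrix (l ⊕ m) (l ⊕ m) ℝ} {u : ℝ} (hf : HasDerivAt f f' u) :
    HasDerivAt (fun t => (f t).toBlocks₂₂) f'.toBlocks₂₂ u := by
  exact (blocksCLM₂₂ (l := l) (m := m)).hasFDerivAt.comp_hasDerivAt u hf

/-- Heterogeneous matrix multiplication as a continuous bilinear map. -/
noncomputable def mulCLM : Matrix l l ℝ →L[ℝ] Matrix l m ℝ →L[ℝ] Matrix l m ℝ :=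
  LinearMap.toContinuousLinearMap
    { toFun := fun X => LinearMap.toContinuousLinearMap
        { toFun := fun Y => X * Y
          map_add' := fun _ _ => Matrix.mul_add _ _ _
          map_smul' := fun _ _ => Matrix.mul_smul _ _ _ }
      map_add' := fun X X' => by
        apply ContinuousLinearMap.ext
        intro Y
        exact Matrix.add_mul _ _ _
      map_smul' := fun c X => by
        apply ContinuousLinearMap.ext
        intro Y
        exact Matrix.smul_mul _ _ _ }

lemma HasDerivAt.matMul {f : ℝ → Matrix l l ℝ} {g : ℝ → Matrix l m ℝ}
    {f' : Matrix l l ℝ} {g' : Matrix l m ℝ} {u : ℝ}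
    (hf : HasDerivAt f f' u) (hg : HasDerivAt g g' u) :
    HasDerivAt (fun t => f t * g t) (f' * g u + f u * g') u := by
  have hf2 : ∀ i k, HasDerivAt (fun t => f t i k) (f' i k) u :=
    fun i k => hasDerivAt_pi.1 (hasDerivAt_pi.1 hf i) k
  have hg2 : ∀ k j, HasDerivAt (fun t => g t k j) (g' k j) u :=
    fun k j => hasDerivAt_pi.1 (hasDerivAt_pi.1 hg k) j
  refine hasDerivAt_pi.2 fun i => hasDerivAt_pi.2 fun j => ?_
  refine (HasDerivAt.fun_sum (u := Finset.univ)
    (fun k _ => (hf2 i k).mul (hg2 k j))).congr_deriv ?_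
  simp [Matrix.mul_apply, Finset.sum_add_distrib]

lemma expCont (M : Matrix m m ℝ) :
    Continuous fun s : ℝ => NormedSpace.exp (s • M) :=
  NormedSpace.exp_continuous.comp (continuous_id.smul continuous_const)

lemma blocks22_exp (P : Matrix l l ℝ) (C : Matrix l m ℝ) (S : Matrix m m ℝ) (t : ℝ) :
    (NormedSpace.exp (t • (Matrix.fromBlocks P C 0 S))).toBlocks₂₂
      = NormedSpace.exp (t • S) := by
  have hderiv : ∀ u : ℝ, HasDerivAt (fun t : ℝ => NormedSpace.exp (t • (-S)) *
      (NormedSpace.exp (t • (Matrix.fromBlocks P C 0 S))).toBlocks₂₂) 0 u := by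
    intro u
    have h1 : HasDerivAt (fun u : ℝ => NormedSpace.exp (u • (-S)))
        (NormedSpace.exp (u • (-S)) * (-S)) u := hasDerivAt_exp_smul_const _ _
    have h2 : HasDerivAt (fun u : ℝ => NormedSpace.exp (u • (Matrix.fromBlocks P C 0 S)))
        ((Matrix.fromBlocks P C 0 S) *
          NormedSpace.exp (u • (Matrix.fromBlocks P C 0 S))) u :=
      hasDerivAt_exp_smul_const' _ _
    have h2' := hasDerivAt_toBlocks₂₂ h2
    have hb : ((Matrix.fromBlocks P C 0 S) *
        NormedSpace.exp (u • (Matrix.fromBlocks P C 0 S))).toBlocks₂₂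
        = S * (NormedSpace.exp (u • (Matrix.fromBlocks P C 0 S))).toBlocks₂₂ := by
      conv_lhs => rw [← Matrix.fromBlocks_toBlocks
        (NormedSpace.exp (u • (Matrix.fromBlocks P C 0 S))), Matrix.fromBlocks_multiply]
      simp [Matrix.toBlocks_fromBlocks₂₂]
    rw [hb] at h2'
    refine (h1.mul h2').congr_deriv ?_
    simp only [mul_assoc, neg_mul, mul_neg]
    abel
  have hconst : ∀ u : ℝ, (fun t : ℝ => NormedSpace.exp (t • (-S)) *
      (NormedSpace.exp (t • (Matrix.fromBlocks P C 0 S))).toBlocks₂₂) u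
        = (fun t : ℝ => NormedSpace.exp (t • (-S)) *
      (NormedSpace.exp (t • (Matrix.fromBlocks P C 0 S))).toBlocks₂₂) 0 :=
    fun u => is_const_of_deriv_eq_zero (fun x => (hderiv x).differentiableAt)
      (fun x => (hderiv x).deriv) u 0
  have hgt : NormedSpace.exp (t • (-S)) *
      (NormedSpace.exp (t • (Matrix.fromBlocks P C 0 S))).toBlocks₂₂ = 1 := by
    have := hconst t
    simp only [zero_smul, NormedSpace.exp_zero, one_mul] at this
    rw [this, ← Matrix.fromBlocks_one, Matrix.toBlocks_fromBlocks₂₂]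
  have hcomm : Commute (t • S) (t • (-S)) := by
    rw [smul_neg]; exact (Commute.refl (t • S)).neg_right
  have hinv : NormedSpace.exp (t • S) * NormedSpace.exp (t • (-S)) = 1 := by
    erw [← NormedSpace.exp_add_of_commute hcomm]
    simp [smul_neg]
  calc (NormedSpace.exp (t • (Matrix.fromBlocks P C 0 S))).toBlocks₂₂
      = (NormedSpace.exp (t • S) * NormedSpace.exp (t • (-S))) *
          (NormedSpace.exp (t • (Matrix.fromBlocks P C 0 S))).toBlocks₂₂ := by
        rw [hinv, one_mul]
    _ = NormedSpace.exp (t • S) := by rw [mul_assoc, hgt, mul_one]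

lemma key (P : Matrix l l ℝ) (C : Matrix l m ℝ) (S : Matrix m m ℝ) (t : ℝ) :
    NormedSpace.exp (t • (-P)) *
        (NormedSpace.exp (t • (Matrix.fromBlocks P C 0 S))).toBlocks₁₂
      = ∫ s in (0:ℝ)..t,
          NormedSpace.exp (s • (-P)) * C * NormedSpace.exp (s • S) := by
  have hderiv : ∀ u : ℝ, HasDerivAt (fun t : ℝ => NormedSpace.exp (t • (-P)) *
      (NormedSpace.exp (t • (Matrix.fromBlocks P C 0 S))).toBlocks₁₂)
      (NormedSpace.exp (u • (-P)) * C * NormedSpace.exp (u • S)) u := by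
    intro u
    have h1 : HasDerivAt (fun u : ℝ => NormedSpace.exp (u • (-P)))
        (NormedSpace.exp (u • (-P)) * (-P)) u := hasDerivAt_exp_smul_const _ _
    have h2 : HasDerivAt (fun u : ℝ => NormedSpace.exp (u • (Matrix.fromBlocks P C 0 S)))
        ((Matrix.fromBlocks P C 0 S) *
          NormedSpace.exp (u • (Matrix.fromBlocks P C 0 S))) u :=
      hasDerivAt_exp_smul_const' _ _
    have h2' := hasDerivAt_toBlocks₁₂ h2
    have hb : ((Matrix.fromBlocks P C 0 S) *
        NormedSpace.exp (u • (Matrix.fromBlocks P C 0 S))).toBlocks₁₂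
        = P * (NormedSpace.exp (u • (Matrix.fromBlocks P C 0 S))).toBlocks₁₂
            + C * NormedSpace.exp (u • S) := by
      conv_lhs => rw [← Matrix.fromBlocks_toBlocks
        (NormedSpace.exp (u • (Matrix.fromBlocks P C 0 S))), Matrix.fromBlocks_multiply]
      rw [Matrix.toBlocks_fromBlocks₁₂, blocks22_exp P C S u]
    rw [hb] at h2'
    have := h1.matMul h2'
    convert this using 1
    simp only [Matrix.mul_add, Matrix.mul_assoc, Matrix.neg_mul, Matrix.mul_neg]
    exact (neg_add_cancel_left _ _).symm
  have hcont : Continuous fun s : ℝ =>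
      NormedSpace.exp (s • (-P)) * C * NormedSpace.exp (s • S) :=
    ((expCont (-P)).matrix_mul continuous_const).matrix_mul (expCont S)
  have hFTC := intervalIntegral.integral_eq_sub_of_hasDerivAt
      (f := fun t : ℝ => NormedSpace.exp (t • (-P)) *
        (NormedSpace.exp (t • (Matrix.fromBlocks P C 0 S))).toBlocks₁₂)
      (fun x (_ : x ∈ Set.uIcc (0:ℝ) t) => hderiv x) (hcont.intervalIntegrable 0 t)
  rw [hFTC]
  simp only [zero_smul, NormedSpace.exp_zero]
  rw [show (Matrix.toBlocks₁₂ (1 : Matrix (l ⊕ m) (l ⊕ m) ℝ)) = 0 from by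
    rw [← Matrix.fromBlocks_one, Matrix.toBlocks_fromBlocks₁₂]]
  rw [Matrix.mul_zero, sub_zero]

lemma key_zero (S : Matrix m m ℝ) (t : ℝ) :
    (NormedSpace.exp
        (t • (Matrix.fromBlocks 0 1 0 S : Matrix (m ⊕ m) (m ⊕ m) ℝ))).toBlocks₁₂
      = ∫ s in (0:ℝ)..t, NormedSpace.exp (s • S) := by
  have := key (0 : Matrix m m ℝ) (1 : Matrix m m ℝ) S t
  simpa only [neg_zero, smul_zero, NormedSpace.exp_zero, one_mul, mul_one] using this

end Aux

/-- For square matrices `A, B, Q_c` of size `n`,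
`∫₀ᵗ exp(Bτ) Q_c (∫₀^τ exp(Ar) dr) dτ = exp(Bt) · H₃(t)` where `H₃(t)` is the
top-right `n×n` block of `exp(H_c t)` with `H_c = [[-B, Q_c, 0], [0, 0, I], [0, 0, A]]`. -/
theorem integral_type3 (n : ℕ) (A B Qc : Matrix (Fin n) (Fin n) ℝ) (t : ℝ) :
    (∫ τ in (0:ℝ)..t,
        NormedSpace.exp (τ • B) * Qc * (∫ r in (0:ℝ)..τ, NormedSpace.exp (r • A)))
      = NormedSpace.exp (t • B) *
        ((NormedSpace.exp
            (t • (Matrix.fromBlocks (-B) (Matrix.fromCols Qc 0) 0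
              (Matrix.fromBlocks 0 1 0 A) :
              Matrix (Fin n ⊕ (Fin n ⊕ Fin n)) (Fin n ⊕ (Fin n ⊕ Fin n)) ℝ))).toBlocks₁₂).toCols₂ := by
  have hkey := key (-B) (Matrix.fromCols Qc 0) (Matrix.fromBlocks 0 1 0 A) t
  rw [neg_neg] at hkey
  have hmulcol : ∀ (X : Matrix (Fin n) (Fin n) ℝ)
      (Y : Matrix (Fin n) ((Fin n ⊕ Fin n) ⊕ (Fin n ⊕ Fin n)) ℝ), True := fun _ _ => trivial
  have hmulcol' : ∀ {p : Type} [Fintype p] (X : Matrix (Fin n) (Fin n) ℝ)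
      (Y : Matrix (Fin n) (Fin n ⊕ p) ℝ),
      X * Y.toCols₂ = (X * Y).toCols₂ := by
    intro p _ X Y
    ext i j
    simp [Matrix.toCols₂, Matrix.mul_apply]
  rw [hmulcol', hkey]
  have hcont : Continuous fun s : ℝ =>
      NormedSpace.exp (s • B) * (Matrix.fromCols Qc 0 : Matrix (Fin n) (Fin n ⊕ Fin n) ℝ) *
        NormedSpace.exp (s • (Matrix.fromBlocks 0 1 0 A :
          Matrix (Fin n ⊕ Fin n) (Fin n ⊕ Fin n) ℝ)) :=
    ((expCont B).matrix_mul continuous_const).matrix_mul (expCont _)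
  have hii : IntervalIntegrable (fun s : ℝ =>
      NormedSpace.exp (s • B) * (Matrix.fromCols Qc 0 : Matrix (Fin n) (Fin n ⊕ Fin n) ℝ) *
        NormedSpace.exp (s • (Matrix.fromBlocks 0 1 0 A :
          Matrix (Fin n ⊕ Fin n) (Fin n ⊕ Fin n) ℝ))) MeasureTheory.volume 0 t :=
    hcont.intervalIntegrable 0 t
  rw [toCols₂_intervalIntegral hii]
  refine intervalIntegral.integral_congr fun s _ => ?_
  show NormedSpace.exp (s • B) * Qc * (∫ r in (0:ℝ)..s, NormedSpace.exp (r • A))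
      = (NormedSpace.exp (s • B) * (Matrix.fromCols Qc 0 : Matrix (Fin n) (Fin n ⊕ Fin n) ℝ) *
          NormedSpace.exp (s • (Matrix.fromBlocks 0 1 0 A :
            Matrix (Fin n ⊕ Fin n) (Fin n ⊕ Fin n) ℝ))).toCols₂
  conv_rhs => rw [Matrix.mul_assoc, ← hmulcol']
  rw [Matrix.mul_assoc]
  congr 1
  conv_rhs => rw [← Matrix.fromBlocks_toBlocks (NormedSpace.exp
      (s • (Matrix.fromBlocks 0 1 0 A : Matrix (Fin n ⊕ Fin n) (Fin n ⊕ Fin n) ℝ))),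
    Matrix.fromCols_mul_fromBlocks, Matrix.toCols₂_fromCols,
    key_zero A s]
  simp
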